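/- Let β > 1 and λ_i, λ_j > 0, and define ψ(B, β, λ_i, λ_j) = λ_i e^{−β^{−B}(λ_i + βλ_j)}/(λ_i + βλ_j) + (e^{λ_i β^{−B}} − 1) e^{−β^{−B}(λ_i + βλ_j)} for real B. Then the derivative of ψ with respect to B equals λ_j β^{−B+1} (ln β) (e^{λ_i β^{−B}} − 1) e^{−β^{−B}(λ_i + βλ_j)}, which is nonnegative; in particular B ↦ ψ(B, β, λ_i, λ_j) is monotone nondecreasing. -/

import Mathlib

/-- The function `ψ(B, β, λᵢ, λⱼ)` from Theorem 3 of the paper. -/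
noncomputable def psi (B β li lj : ℝ) : ℝ :=
  li * Real.exp (-(β ^ (-B)) * (li + β * lj)) / (li + β * lj)
    + (Real.exp (li * β ^ (-B)) - 1) * Real.exp (-(β ^ (-B)) * (li + β * lj))

/-- For `β > 1` and `λᵢ, λⱼ > 0`, the derivative of `B ↦ ψ(B, β, λᵢ, λⱼ)`
equals `λⱼ β^{-B+1} (ln β) (e^{λᵢ β^{-B}} - 1) e^{-β^{-B}(λᵢ + β λⱼ)}`, which is nonnegative;
in particular `B ↦ ψ(B, β, λᵢ, λⱼ)` is monotone nondecreasing. -/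
theorem psi_hasDerivAt_and_monotone
    (β li lj : ℝ) (hβ : 1 < β) (hli : 0 < li) (hlj : 0 < lj) :
    (∀ B : ℝ,
      HasDerivAt (fun B => psi B β li lj)
        (lj * β ^ (-B + 1) * Real.log β * (Real.exp (li * β ^ (-B)) - 1)
          * Real.exp (-(β ^ (-B)) * (li + β * lj))) B
      ∧ 0 ≤ lj * β ^ (-B + 1) * Real.log β * (Real.exp (li * β ^ (-B)) - 1)
          * Real.exp (-(β ^ (-B)) * (li + β * lj)))
    ∧ Monotone (fun B => psi B β li lj) := by
  have hβ0 : (0:ℝ) < β := lt_trans one_pos hβ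
  have hs : 0 < li + β * lj := by positivity
  have key : ∀ B : ℝ, HasDerivAt (fun B => psi B β li lj)
      (lj * β ^ (-B + 1) * Real.log β * (Real.exp (li * β ^ (-B)) - 1)
        * Real.exp (-(β ^ (-B)) * (li + β * lj))) B := by
    intro B
    have hu : HasDerivAt (fun B : ℝ => β ^ (-B)) (β ^ (-B) * Real.log β * (-1)) B := by
      have h1 : HasDerivAt (fun x : ℝ => β ^ x) (β ^ (-B) * Real.log β) (-B) :=
        (Real.hasStrictDerivAt_const_rpow hβ0 (-B)).hasDerivAt
      have h2 : HasDerivAt (fun B : ℝ => -B) (-1) B := (hasDerivAt_id B).neg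
      exact h1.comp B h2
    have he1 : HasDerivAt (fun B : ℝ => -(β ^ (-B)) * (li + β * lj))
        (-(β ^ (-B) * Real.log β * (-1)) * (li + β * lj)) B := hu.neg.mul_const _
    have hE1 := he1.exp
    have ht1 := (hE1.const_mul li).div_const (li + β * lj)
    have hE2 := (hu.const_mul li).exp
    have ht2 := (hE2.sub_const 1).mul hE1
    have hsum := ht1.add ht2
    refine hsum.congr_deriv ?_
    rw [Real.rpow_add hβ0, Real.rpow_one]
    field_simp
    ring
  have nonneg : ∀ B : ℝ, 0 ≤ lj * β ^ (-B + 1) * Real.log β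
      * (Real.exp (li * β ^ (-B)) - 1) * Real.exp (-(β ^ (-B)) * (li + β * lj)) := by
    intro B
    have hlog : 0 ≤ Real.log β := Real.log_nonneg hβ.le
    have hexp : 1 ≤ Real.exp (li * β ^ (-B)) := Real.one_le_exp (by positivity)
    have hp : (0:ℝ) < β ^ (-B + 1) := Real.rpow_pos_of_pos hβ0 _
    exact mul_nonneg (mul_nonneg (mul_nonneg (mul_nonneg hlj.le hp.le) hlog)
      (by linarith)) (Real.exp_pos _).le
  refine ⟨fun B => ⟨key B, nonneg B⟩, ?_⟩
  apply monotone_of_deriv_nonneg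
  · exact fun B => (key B).differentiableAt
  · intro B
    rw [(key B).deriv]
    exact nonneg B
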